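/- If S is a unilateral weighted shift with positive bounded weights such that m(S) = w(S) (lower bound equals numerical radius), then S possesses Bishop's property (β). -/

import Mathlib

open Filter

section Defs

variable {X : Type*} [NormedAddCommGroup X] [NormedSpace ℂ X]

/-- `T` possesses Bishop's property (β). -/
def HasBishopBeta (T : X →L[ℂ] X) : Prop :=
  ∀ U : Set ℂ, IsOpen U →
    ∀ f : ℕ → ℂ → X, (∀ n, AnalyticOnNhd ℂ (f n) U) →
      (∀ K : Set ℂ, K ⊆ U → IsCompact K →
        TendstoUniformlyOn (fun n z => (T - z • (1 : X →L[ℂ] X)) (f n z)) 0 atTop K) →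
      ∀ K : Set ℂ, K ⊆ U → IsCompact K →
        TendstoUniformlyOn (fun n z => f n z) 0 atTop K

/-- The lower bound `m(T) = inf {‖T x‖ : ‖x‖ = 1}` of an operator `T`. -/
noncomputable def lowerBound (T : X →L[ℂ] X) : ℝ :=
  sInf ((fun x => ‖T x‖) '' Metric.sphere (0 : X) 1)

end Defs

variable {H : Type*} [NormedAddCommGroup H] [InnerProductSpace ℂ H] [CompleteSpace H]

/-- The numerical radius `w(T) = sup {|⟨T x, x⟩| : ‖x‖ = 1}`. -/
noncomputable def numericalRadius (T : H →L[ℂ] H) : ℝ :=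
  sSup ((fun x => ‖(inner ℂ (T x) x : ℂ)‖) '' Metric.sphere (0 : H) 1)

section Aux

set_option linter.unusedSectionVars false

/-- Key algebraic identity for two points on the unit circle. -/
lemma aux_prod (w c : ℂ) (hw : ‖w‖ = 1) (hc : ‖c‖ = 1) :
    ‖w - c‖ * ‖w - (starRingEnd ℂ) c‖ = 2 * |w.re - c.re| := by
  have hw2 : w.re * w.re + w.im * w.im = 1 := by
    have := congrArg (· ^ 2) hw
    simpa [Complex.sq_norm, Complex.normSq_apply] using this
  have hc2 : c.re * c.re + c.im * c.im = 1 := by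
    have := congrArg (· ^ 2) hc
    simpa [Complex.sq_norm, Complex.normSq_apply] using this
  have h1 : (‖w - c‖ * ‖w - (starRingEnd ℂ) c‖) ^ 2 = (2 * |w.re - c.re|) ^ 2 := by
    rw [mul_pow, mul_pow, Complex.sq_norm,
      Complex.sq_norm, sq_abs]
    simp only [Complex.normSq_apply, Complex.sub_re, Complex.sub_im, Complex.conj_re,
      Complex.conj_im]
    nlinarith [hw2, hc2]
  have h2 : 0 ≤ ‖w - c‖ * ‖w - (starRingEnd ℂ) c‖ := by positivity
  have h3 : 0 ≤ 2 * |w.re - c.re| := by positivity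
  nlinarith [h1, h2, h3]

/-- Geometric identity: for a circle of radius `s` centered at a point `l0` on the circle of
radius `t` about the origin, there are two points `a`, `b` (the intersections with the circle
of radius `t`) such that `t‖z-a‖‖z-b‖ = s|‖z‖-t|(‖z‖+t)` for `z` on the small circle. -/
lemma geom (t s : ℝ) (l0 : ℂ) (ht : 0 < t) (hs : 0 < s) (hst : s ≤ t) (hl0 : ‖l0‖ = t) :
    ∃ a b : ℂ, ‖a - l0‖ = s ∧ ‖b - l0‖ = s ∧ ∀ z : ℂ, ‖z - l0‖ = s →
      t * (‖z - a‖ * ‖z - b‖) = s * (|‖z‖ - t| * (‖z‖ + t)) := by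
  set u : ℂ := l0 * ((t : ℂ))⁻¹ with hu
  have htC : ((t:ℝ):ℂ) ≠ 0 := by exact_mod_cast ht.ne'
  have hlu : l0 = (t:ℂ) * u := by rw [hu]; field_simp
  have hunorm : ‖u‖ = 1 := by
    rw [hu, norm_mul, norm_inv, hl0, Complex.norm_real, Real.norm_eq_abs,
      abs_of_pos ht, mul_inv_cancel₀ ht.ne']
  have huc : u * (starRingEnd ℂ) u = 1 := by
    rw [Complex.mul_conj]
    norm_cast
    rw [← Complex.sq_norm, hunorm]
    norm_num
  obtain ⟨β, hβdef⟩ : ∃ β : ℝ, β = s / (2 * t) := ⟨_, rfl⟩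
  have hβpos : 0 < β := by rw [hβdef]; positivity
  have hβle : β ≤ 1 / 2 := by
    rw [hβdef, div_le_div_iff₀ (by positivity) (by norm_num)]
    linarith
  have hβsq : 0 ≤ 1 - β ^ 2 := by nlinarith
  obtain ⟨c, hcdef⟩ : ∃ c : ℂ, c = (⟨-β, Real.sqrt (1 - β^2)⟩ : ℂ) := ⟨_, rfl⟩
  have hcre : c.re = -β := by rw [hcdef]
  have hcnorm : ‖c‖ = 1 := by
    have hns : Complex.normSq c = 1 := by
      rw [hcdef]
      simp only [Complex.normSq_apply]
      rw [Real.mul_self_sqrt hβsq]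
      ring
    rw [Complex.norm_def, hns, Real.sqrt_one]
  set a : ℂ := l0 + (s:ℂ) * u * c with ha
  set b : ℂ := l0 + (s:ℂ) * u * (starRingEnd ℂ) c with hb
  have hsu : ‖(s:ℂ) * u‖ = s := by
    rw [norm_mul, hunorm, Complex.norm_real, Real.norm_eq_abs, abs_of_pos hs, mul_one]
  have hsune : (s:ℂ) * u ≠ 0 := by
    intro h0
    rw [h0, norm_zero] at hsu
    exact hs.ne hsu
  have hconjnorm : ‖(starRingEnd ℂ) c‖ = 1 := by rw [RCLike.norm_conj]; exact hcnorm
  refine ⟨a, b, ?_, ?_, ?_⟩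
  · rw [ha]; simp only [add_sub_cancel_left]; rw [norm_mul, hsu, hcnorm, mul_one]
  · rw [hb]; simp only [add_sub_cancel_left]; rw [norm_mul, hsu, hconjnorm, mul_one]
  · intro z hz
    set w : ℂ := (z - l0) / ((s:ℂ) * u) with hw
    have hzw : z = l0 + (s:ℂ) * u * w := by
      rw [hw, mul_div_cancel₀ _ hsune]; ring
    have hwnorm : ‖w‖ = 1 := by
      rw [hw, norm_div, hz, hsu, div_self hs.ne']
    have hza : z - a = (s:ℂ) * u * (w - c) := by rw [hzw, ha]; ring
    have hzb : z - b = (s:ℂ) * u * (w - (starRingEnd ℂ) c) := by rw [hzw, hb]; ring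
    have hprod : ‖z - a‖ * ‖z - b‖ = (s * s) * (‖w - c‖ * ‖w - (starRingEnd ℂ) c‖) := by
      rw [hza, hzb, norm_mul, hsu, norm_mul, hsu]; ring
    rw [hprod, aux_prod w c hwnorm hcnorm, hcre, sub_neg_eq_add]
    have hz2 : ‖z‖^2 - t^2 = 2*t*s*(w.re + β) := by
      have h1 : ‖z‖^2 = Complex.normSq z := by
        rw [Complex.sq_norm]
      rw [h1, hzw, Complex.normSq_add]
      have h2 : Complex.normSq l0 = t^2 := by
        rw [← Complex.sq_norm, hl0]
      have h3 : Complex.normSq ((s:ℂ) * u * w) = s^2 := by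
        rw [← Complex.sq_norm, norm_mul, hsu, hwnorm, mul_one]
      have h5 : l0 * (starRingEnd ℂ) ((s:ℂ) * u * w) = ((t*s : ℝ):ℂ) * (starRingEnd ℂ) w := by
        rw [hlu, map_mul, map_mul, Complex.conj_ofReal]
        push_cast
        linear_combination ((t:ℂ) * (s:ℂ) * (starRingEnd ℂ) w) * huc
      have h4 : (l0 * (starRingEnd ℂ) ((s:ℂ) * u * w)).re = t * s * w.re := by
        rw [h5]
        simp [Complex.mul_re, Complex.conj_re, Complex.conj_im]
      rw [h2, h3, h4, hβdef]
      field_simp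
      ring
    have habs : |‖z‖ - t| * (‖z‖ + t) = 2*t*s*|w.re + β| := by
      have he : |‖z‖ - t| * (‖z‖ + t) = |‖z‖^2 - t^2| := by
        rw [← abs_of_pos (by positivity : (0:ℝ) < ‖z‖ + t), ← abs_mul]
        ring_nf
      rw [he, hz2, abs_mul, abs_of_pos (by positivity : (0:ℝ) < 2*t*s)]
    rw [habs]
    ring

/-- Maximum modulus bound: a function analytic on a disc centered at a point `l0` on the circle
of radius `t`, which satisfies `|‖z‖-t|‖f z‖ ≤ ε` on the boundary circle, is bounded near the
center. -/
lemma point_bound {X : Type*} [NormedAddCommGroup X] [NormedSpace ℂ X]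
    (t s ε : ℝ) (ht : 0 < t) (hs : 0 < s) (hst : s ≤ t) (hε : 0 ≤ ε)
    (l0 l1 : ℂ) (hl0 : ‖l0‖ = t) (hl1 : ‖l1 - l0‖ ≤ s / 2)
    (f : ℂ → X) (hf : DiffContOnCl ℂ f (Metric.ball l0 s))
    (hbd : ∀ z : ℂ, ‖z - l0‖ = s → |‖z‖ - t| * ‖f z‖ ≤ ε) :
    s * s * t * ‖f l1‖ ≤ 4 * (s * ((2*t+s) * ε)) := by
  obtain ⟨a, b, hA, hB, hid⟩ := geom t s l0 ht hs hst hl0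
  set g : ℂ → X := fun z => ((z - a) * (z - b)) • f z with hg
  have hgd : DiffContOnCl ℂ g (Metric.ball l0 s) := by
    refine ⟨DifferentiableOn.smul ?_ hf.differentiableOn, ContinuousOn.smul ?_ hf.continuousOn⟩
    · exact ((differentiable_id.sub_const a).mul (differentiable_id.sub_const b)).differentiableOn
    · exact ((continuous_id.sub continuous_const).mul
        (continuous_id.sub continuous_const)).continuousOn
  have hC : ∀ z ∈ frontier (Metric.ball l0 s), ‖g z‖ ≤ s * ((2*t+s) * ε) / t := by
    intro z hz
    rw [frontier_ball l0 hs.ne'] at hz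
    have hzs : ‖z - l0‖ = s := by
      rw [← dist_eq_norm]; exact hz
    have hznorm : ‖z‖ ≤ t + s := by
      calc ‖z‖ = ‖l0 + (z - l0)‖ := by ring_nf
        _ ≤ ‖l0‖ + ‖z - l0‖ := norm_add_le _ _
        _ = t + s := by rw [hl0, hzs]
    have h1 : t * ‖g z‖ = s * ((‖z‖ + t) * (|‖z‖ - t| * ‖f z‖)) := by
      rw [hg]
      simp only [norm_smul, norm_mul]
      rw [← mul_assoc, hid z hzs]
      ring
    have h2 : t * ‖g z‖ ≤ s * ((2*t+s) * ε) := by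
      rw [h1]
      have hzt : 0 ≤ ‖z‖ + t := by positivity
      have := hbd z hzs
      have h3 : (‖z‖ + t) * (|‖z‖ - t| * ‖f z‖) ≤ (2*t+s) * ε := by
        calc (‖z‖ + t) * (|‖z‖ - t| * ‖f z‖) ≤ (‖z‖ + t) * ε := by
              apply mul_le_mul_of_nonneg_left this hzt
          _ ≤ (2*t+s) * ε := by apply mul_le_mul_of_nonneg_right _ hε; linarith
      apply mul_le_mul_of_nonneg_left h3 hs.le
    rw [le_div_iff₀ ht]
    linarith [h2]
  have hl1mem : l1 ∈ closure (Metric.ball l0 s) := by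
    rw [closure_ball l0 hs.ne', Metric.mem_closedBall, dist_eq_norm]
    linarith
  have hmax := Complex.norm_le_of_forall_mem_frontier_norm_le Metric.isBounded_ball hgd hC hl1mem
  have hga : s / 2 ≤ ‖l1 - a‖ := by
    have : ‖a - l0‖ ≤ ‖a - l1‖ + ‖l1 - l0‖ := by
      simpa using norm_add_le (a - l1) (l1 - l0)
    rw [hA] at this
    rw [← norm_neg]; simp only [neg_sub]
    linarith
  have hgb : s / 2 ≤ ‖l1 - b‖ := by
    have : ‖b - l0‖ ≤ ‖b - l1‖ + ‖l1 - l0‖ := by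
      simpa using norm_add_le (b - l1) (l1 - l0)
    rw [hB] at this
    rw [← norm_neg]; simp only [neg_sub]
    linarith
  have hgl1 : ‖g l1‖ = ‖l1 - a‖ * ‖l1 - b‖ * ‖f l1‖ := by
    rw [hg]; simp only [norm_smul, norm_mul]
  have key : (s/2) * (s/2) * ‖f l1‖ ≤ s * ((2*t+s) * ε) / t := by
    calc (s/2) * (s/2) * ‖f l1‖ ≤ ‖l1 - a‖ * ‖l1 - b‖ * ‖f l1‖ := by
          apply mul_le_mul_of_nonneg_right _ (norm_nonneg _)
          apply mul_le_mul hga hgb (by positivity) (norm_nonneg _)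
      _ = ‖g l1‖ := hgl1.symm
      _ ≤ _ := hmax
  rw [le_div_iff₀ ht] at key
  nlinarith [key]

omit [CompleteSpace H] in
lemma mem_sph {x : H} (hx : ‖x‖ = 1) : x ∈ Metric.sphere (0 : H) 1 := by
  simpa [Metric.mem_sphere, dist_zero_right] using hx

omit [CompleteSpace H] in
lemma lowerBound_le (S : H →L[ℂ] H) {x : H} (hx : ‖x‖ = 1) : lowerBound S ≤ ‖S x‖ :=
  csInf_le ⟨0, by rintro _ ⟨y, hy, rfl⟩; positivity⟩ ⟨x, mem_sph hx, rfl⟩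

omit [CompleteSpace H] in
lemma le_numericalRadius (S : H →L[ℂ] H) {x : H} (hx : ‖x‖ = 1) :
    ‖(inner ℂ (S x) x : ℂ)‖ ≤ numericalRadius S := by
  apply le_csSup
  · refine ⟨‖S‖, ?_⟩
    rintro _ ⟨y, hy, rfl⟩
    have hy1 : ‖y‖ = 1 := by simpa [Metric.mem_sphere, dist_zero_right] using hy
    calc ‖(inner ℂ (S y) y : ℂ)‖ ≤ ‖S y‖ * ‖y‖ := norm_inner_le_norm _ _
      _ ≤ ‖S‖ * ‖y‖ * ‖y‖ := by gcongr; exact S.le_opNorm y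
      _ = ‖S‖ := by rw [hy1]; ring
  · exact ⟨x, mem_sph hx, rfl⟩

omit [CompleteSpace H] in
/-- The fundamental resolvent-type estimate `|‖z‖ - t|‖x‖ ≤ ‖(S - z)x‖` when `m(S) = w(S) = t`. -/
lemma key_est (S : H →L[ℂ] H) (h : lowerBound S = numericalRadius S)
    (z : ℂ) (x : H) : |‖z‖ - lowerBound S| * ‖x‖ ≤ ‖S x - z • x‖ := by
  rcases eq_or_ne x 0 with rfl | hx0
  · simp
  · have hn : 0 < ‖x‖ := norm_pos_iff.mpr hx0
    set u : H := ((‖x‖⁻¹ : ℝ) : ℂ) • x with hu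
    have hu1 : ‖u‖ = 1 := by
      rw [hu, norm_smul]
      simp [abs_of_nonneg (inv_nonneg.mpr (norm_nonneg x)), inv_mul_cancel₀ hn.ne']
    have hSu : S x - z • x = ((‖x‖ : ℝ) : ℂ) • (S u - z • u) := by
      rw [hu, map_smul, smul_sub, smul_smul, smul_comm z, smul_smul]
      norm_cast
      rw [mul_inv_cancel₀ hn.ne']
      simp
    have h1 : lowerBound S - ‖z‖ ≤ ‖S u - z • u‖ := by
      have := lowerBound_le S hu1
      have htri : ‖S u‖ ≤ ‖S u - z • u‖ + ‖z • u‖ := by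
        simpa using norm_add_le (S u - z • u) (z • u)
      rw [norm_smul, hu1, mul_one] at htri
      linarith
    have h2 : ‖z‖ - lowerBound S ≤ ‖S u - z • u‖ := by
      have hcs : ‖(inner ℂ (S u - z • u) u : ℂ)‖ ≤ ‖S u - z • u‖ := by
        simpa only [hu1, mul_one] using norm_inner_le_norm (𝕜 := ℂ) (S u - z • u) u
      have hin : (inner ℂ (S u - z • u) u : ℂ)
          = (inner ℂ (S u) u : ℂ) - (starRingEnd ℂ) z := by
        rw [inner_sub_left, inner_smul_left, inner_self_eq_norm_sq_to_K, hu1]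
        push_cast
        ring
      have hw := le_numericalRadius S hu1
      rw [← h] at hw
      have hfin : ‖(starRingEnd ℂ) z‖ - ‖(inner ℂ (S u) u : ℂ)‖
          ≤ ‖(inner ℂ (S u - z • u) u : ℂ)‖ := by
        rw [hin]
        calc ‖(starRingEnd ℂ) z‖ - ‖(inner ℂ (S u) u : ℂ)‖
            ≤ ‖(starRingEnd ℂ) z - (inner ℂ (S u) u : ℂ)‖ :=
              norm_sub_norm_le ((starRingEnd ℂ) z) (inner ℂ (S u) u : ℂ)
          _ = ‖(inner ℂ (S u) u : ℂ) - (starRingEnd ℂ) z‖ := by rw [norm_sub_rev]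
      simp only [RCLike.norm_conj] at hfin
      linarith
    have habs : |‖z‖ - lowerBound S| ≤ ‖S u - z • u‖ := abs_sub_le_iff.mpr ⟨h2, h1⟩
    rw [hSu, norm_smul]
    simp only [Complex.norm_real, Real.norm_eq_abs, abs_of_nonneg (norm_nonneg x)]
    calc |‖z‖ - lowerBound S| * ‖x‖ ≤ ‖S u - z • u‖ * ‖x‖ := by gcongr
      _ = ‖x‖ * ‖S u - z • u‖ := mul_comm _ _

/-- There is a unit vector witnessing `w(S) ≥ ω 0 / 2`. -/
lemma exists_unit_inner (S : H →L[ℂ] H) (e : HilbertBasis ℕ ℂ H) (ω : ℕ → ℝ)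
    (hpos : ∀ n, 0 < ω n) (hS : ∀ n, S (e n) = (ω n : ℂ) • e (n + 1)) :
    ∃ x : H, ‖x‖ = 1 ∧ ‖(inner ℂ (S x) x : ℂ)‖ = ω 0 / 2 := by
  have hon := e.orthonormal
  have hnorm : ∀ i, ‖e i‖ = 1 := hon.1
  have hinner : ∀ i j : ℕ, i ≠ j → (inner ℂ (e i) (e j) : ℂ) = 0 := fun i j hij => hon.2 hij
  set c : ℂ := (((Real.sqrt 2)⁻¹ : ℝ) : ℂ) with hc
  set x : H := c • (e 0 + e 1) with hx
  have hs2 : (0:ℝ) < Real.sqrt 2 := by positivity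
  have hee : ‖e 0 + e 1‖ = Real.sqrt 2 := by
    have h2 : ‖e 0 + e 1‖ ^ 2 = Real.sqrt 2 ^ 2 := by
      rw [norm_add_sq (𝕜 := ℂ), hinner 0 1 (by norm_num), hnorm, hnorm,
        Real.sq_sqrt (by norm_num)]
      norm_num
    rw [← Real.sqrt_sq (norm_nonneg _), h2, Real.sqrt_sq hs2.le]
  refine ⟨x, ?_, ?_⟩
  · rw [hx, norm_smul, hc, hee]
    simp only [Complex.norm_real, Real.norm_eq_abs, abs_inv, abs_of_nonneg hs2.le]
    exact inv_mul_cancel₀ hs2.ne'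
  · have hSx : S x = c • ((ω 0 : ℂ) • e 1 + (ω 1 : ℂ) • e 2) := by
      rw [hx, map_smul, map_add, hS 0, hS 1]
    have hval : (inner ℂ (S x) x : ℂ) = (starRingEnd ℂ) c * c * (ω 0 : ℂ) := by
      rw [hSx, hx, inner_smul_left, inner_smul_right]
      rw [inner_add_left, inner_add_right, inner_add_right, inner_smul_left, inner_smul_left,
        inner_smul_left, inner_smul_left]
      rw [hinner 1 0 (by norm_num), hinner 2 0 (by norm_num), hinner 2 1 (by norm_num)]
      rw [inner_self_eq_norm_sq_to_K, hnorm 1]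
      simp only [Complex.conj_ofReal]
      push_cast
      ring
    rw [hval, hc]
    rw [Complex.conj_ofReal]
    simp only [norm_mul, norm_inv, Complex.norm_real, Real.norm_eq_abs,
      abs_of_nonneg hs2.le, abs_of_nonneg (hpos 0).le]
    rw [← mul_inv, Real.mul_self_sqrt (by norm_num)]
    ring

end Aux

/-- If a unilateral weighted shift `S` with positive bounded weights satisfies
`m(S) = w(S)`, then `S` possesses Bishop's property (β). -/
theorem bishopBeta_of_lowerBound_eq_numericalRadius (S : H →L[ℂ] H)
    (e : HilbertBasis ℕ ℂ H) (ω : ℕ → ℝ) (hpos : ∀ n, 0 < ω n)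
    (hbd : ∃ M : ℝ, ∀ n, ω n ≤ M)
    (hS : ∀ n, S (e n) = (ω n : ℂ) • e (n + 1))
    (h : lowerBound S = numericalRadius S) :
    HasBishopBeta S := by
  intro U hU f hf hconv K hKU hK
  -- the common value `t = m(S) = w(S)` is positive
  set t : ℝ := lowerBound S with htdef
  have ht : 0 < t := by
    obtain ⟨x, hx1, hxv⟩ := exists_unit_inner S e ω hpos hS
    have h1 : ω 0 / 2 ≤ numericalRadius S := hxv ▸ le_numericalRadius S hx1
    have := hpos 0
    rw [h]
    linarith
  have key := key_est S h
  rw [← htdef] at key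
  -- choose a compact neighborhood `K'` of `K` inside `U`
  obtain ⟨δ, hδ, hthick⟩ := hK.exists_thickening_subset_open hU hKU
  set K' : Set ℂ := Metric.cthickening (δ/2) K with hK'def
  have hK'c : IsCompact K' := hK.cthickening
  have hK'U : K' ⊆ U := by
    refine (Metric.cthickening_subset_thickening' hδ (by linarith) K).trans hthick
  have hKK' : K ⊆ K' := Metric.self_subset_cthickening K
  -- the radius used in the maximum modulus argument
  set r : ℝ := min (δ/4) t with hrdef
  have hr : 0 < r := lt_min (by linarith) ht
  have hrt : r ≤ t := min_le_right _ _
  have hrδ : r ≤ δ/4 := min_le_left _ _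
  -- the constant in the final estimate
  set C : ℝ := max (2/r) (4*(2*t+r)/(r*t)) with hCdef
  have hC0 : 0 < C := lt_max_of_lt_left (by positivity)
  rw [Metric.tendstoUniformlyOn_iff]
  intro ε hε
  have hconv' := hconv K' hK'U hK'c
  rw [Metric.tendstoUniformlyOn_iff] at hconv'
  have hε' : 0 < ε / (C + 1) := by positivity
  filter_upwards [hconv' (ε / (C + 1)) hε'] with n hn
  intro l1 hl1
  -- bound on `(S - z)f n z` on `K'`
  have hgb : ∀ z ∈ K', ‖S (f n z) - z • (f n z)‖ ≤ ε / (C + 1) := by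
    intro z hz
    have := hn z hz
    simp only [Pi.zero_apply, dist_zero_left, ContinuousLinearMap.sub_apply,
      ContinuousLinearMap.smul_apply, ContinuousLinearMap.one_apply] at this
    exact this.le
  rw [Pi.zero_apply, dist_zero_left]
  -- main estimate: `‖f n l1‖ ≤ C * (ε / (C+1))`
  have main : ‖f n l1‖ ≤ C * (ε / (C + 1)) := by
    by_cases hcase : r/2 ≤ |‖l1‖ - t|
    · -- away from the circle: direct estimate
      have h1 := key l1 (f n l1)
      have h2 := hgb l1 (hKK' hl1)
      have h3 : (r/2) * ‖f n l1‖ ≤ ε / (C + 1) := by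
        calc (r/2) * ‖f n l1‖ ≤ |‖l1‖ - t| * ‖f n l1‖ :=
              mul_le_mul_of_nonneg_right hcase (norm_nonneg _)
          _ ≤ ‖S (f n l1) - l1 • (f n l1)‖ := h1
          _ ≤ ε / (C + 1) := h2
      have h4 : ‖f n l1‖ ≤ (2/r) * (ε / (C + 1)) := by
        rw [div_mul_eq_mul_div, le_div_iff₀ hr]
        linarith
      calc ‖f n l1‖ ≤ (2/r) * (ε / (C + 1)) := h4
        _ ≤ C * (ε / (C + 1)) := by
            apply mul_le_mul_of_nonneg_right (le_max_left _ _) hε'.le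
    · -- near the circle: maximum modulus argument
      push_neg at hcase
      have hl1norm : t - r/2 ≤ ‖l1‖ := by
        have := abs_lt.mp hcase
        linarith [this.1]
      have hl1pos : 0 < ‖l1‖ := by linarith
      have hl1ne : l1 ≠ 0 := norm_pos_iff.mp hl1pos
      set l0 : ℂ := ((t / ‖l1‖ : ℝ) : ℂ) * l1 with hl0def
      have hl0norm : ‖l0‖ = t := by
        rw [hl0def, norm_mul, Complex.norm_real, Real.norm_eq_abs,
          abs_of_pos (by positivity : (0:ℝ) < t / ‖l1‖), div_mul_cancel₀ _ hl1pos.ne']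
      have hdist : ‖l1 - l0‖ = |‖l1‖ - t| := by
        have he : l1 - l0 = ((1 - t / ‖l1‖ : ℝ) : ℂ) * l1 := by
          rw [hl0def]; push_cast; ring
        rw [he, norm_mul, Complex.norm_real, Real.norm_eq_abs,
          ← abs_of_pos hl1pos, ← abs_mul]
        congr 1
        have hne : (‖l1‖ : ℝ) ≠ 0 := by
          exact hl1pos.ne'
        field_simp
        rw [abs_of_pos hl1pos]; ring
      have hdist' : ‖l1 - l0‖ ≤ r/2 := by rw [hdist]; exact hcase.le
      have hball : Metric.closedBall l0 r ⊆ K' := by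
        intro z hz
        rw [Metric.mem_closedBall] at hz
        refine Metric.mem_cthickening_of_dist_le z l1 (δ/2) K hl1 ?_
        have hd1 : dist z l1 ≤ dist z l0 + dist l0 l1 := dist_triangle _ _ _
        have hd2 : dist l0 l1 ≤ r/2 := by
          rw [dist_comm, dist_eq_norm]; exact hdist'
        linarith
      have hballU : Metric.closedBall l0 r ⊆ U := hball.trans hK'U
      have hdiff : DiffContOnCl ℂ (f n) (Metric.ball l0 r) := by
        refine ⟨((hf n).differentiableOn).mono
          (Metric.ball_subset_closedBall.trans hballU), ?_⟩
        rw [closure_ball l0 hr.ne']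
        exact ((hf n).continuousOn).mono hballU
      have hbdz : ∀ z : ℂ, ‖z - l0‖ = r → |‖z‖ - t| * ‖f n z‖ ≤ ε / (C + 1) := by
        intro z hz
        have hzK' : z ∈ K' := hball (by rw [Metric.mem_closedBall, dist_eq_norm, hz])
        exact (key z (f n z)).trans (hgb z hzK')
      have hpb := point_bound t r (ε / (C + 1)) ht hr hrt hε'.le l0 l1 hl0norm hdist'
        (f n) hdiff hbdz
      have hfin : ‖f n l1‖ ≤ 4*(2*t+r)/(r*t) * (ε / (C + 1)) := by
        rw [div_mul_eq_mul_div, le_div_iff₀ (by positivity)]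
        nlinarith [hpb, hr, ht, mul_pos hr ht]
      exact hfin.trans (mul_le_mul_of_nonneg_right (le_max_right _ _) hε'.le)
  calc ‖f n l1‖ ≤ C * (ε / (C + 1)) := main
    _ < ε := by
      rw [mul_div_assoc']
      rw [div_lt_iff₀ (by positivity)]
      nlinarith
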